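/- Let p be an odd prime and G a finite group that is a semidirect product N ⋊ H with N ≅ (Z/pZ)^2 and H acting transitively on the nonidentity elements of N. Then every faithful complex representation of G has dimension at least p^2 - 1. -/

import Mathlib

/-- The trace of an idempotent complex matrix is a natural number (its rank), and if the
trace is the full dimension then the matrix is the identity. -/
lemma stmt9_trace_idem {m : ℕ} (M : Matrix (Fin m) (Fin m) ℂ) (h : M * M = M) :
    ∃ r : ℕ, M.trace = r ∧ (M.trace = (m : ℂ) → M = 1) := by
  set f := Matrix.toLin' M with hf
  have hff : f ∘ₗ f = f := by rw [hf, ← Matrix.toLin'_mul, h]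
  obtain ⟨q, hq⟩ := (LinearMap.isProj_iff_isIdempotentElem f).mpr hff
  have htr : LinearMap.trace ℂ _ f = (Module.finrank ℂ q : ℂ) := hq.trace
  have htrM : LinearMap.trace ℂ _ f = M.trace := by
    rw [LinearMap.trace_eq_matrix_trace ℂ (Pi.basisFun ℂ (Fin m)),
      LinearMap.toMatrix_eq_toMatrix', LinearMap.toMatrix'_toLin']
  refine ⟨Module.finrank ℂ q, by rw [← htrM, htr], fun hm => ?_⟩
  have hfr : Module.finrank ℂ q = m := by
    exact_mod_cast htr.symm.trans (htrM.trans hm)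
  have hqt : q = ⊤ := Submodule.eq_top_of_finrank_eq
    (by rw [hfr, Module.finrank_fin_fun])
  have hid : f = LinearMap.id := by
    apply LinearMap.ext
    intro x
    exact hq.map_id x (hqt ▸ Submodule.mem_top)
  have := congrArg LinearMap.toMatrix' (hf ▸ hid)
  rwa [LinearMap.toMatrix'_toLin', LinearMap.toMatrix'_id] at this

/-- Let `p` be an odd prime and `G = N ⋊ H` with `N ≅ (ℤ/pℤ)²` and `H` acting transitively
on the nonidentity elements of `N`. Then every faithful complex representation of `G` has
dimension at least `p² - 1`. -/
theorem stmt9 (p : ℕ) (hp : p.Prime) (hodd : Odd p)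
    (H : Type) [Group H] [Finite H]
    (φ : H →* MulAut (Multiplicative (ZMod p × ZMod p)))
    (htrans : ∀ x y : Multiplicative (ZMod p × ZMod p),
      x ≠ 1 → y ≠ 1 → ∃ h : H, φ h x = y)
    (m : ℕ) (ρ : (Multiplicative (ZMod p × ZMod p) ⋊[φ] H) →* GL (Fin m) ℂ)
    (hρ : Function.Injective ρ) :
    p ^ 2 - 1 ≤ m := by
  haveI : Fact p.Prime := ⟨hp⟩
  set N := Multiplicative (ZMod p × ZMod p) with hN
  -- the restriction of ρ to N, as matrices
  set A : N → Matrix (Fin m) (Fin m) ℂ :=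
    fun n => ((ρ (SemidirectProduct.inl n) : GL (Fin m) ℂ) : Matrix (Fin m) (Fin m) ℂ) with hA
  have hA1 : A 1 = 1 := by simp [hA]
  have hAmul : ∀ n n' : N, A (n * n') = A n * A n' := by
    intro n n'; simp [hA]
  -- a nontrivial element of N
  set n₀ : N := Multiplicative.ofAdd ((1 : ZMod p), (0 : ZMod p)) with hn₀def
  have hn₀ : n₀ ≠ 1 := by
    simp only [hn₀def, ne_eq, Multiplicative.ofAdd]
    intro hcon
    have : ((1 : ZMod p), (0 : ZMod p)) = ((0 : ZMod p), (0 : ZMod p)) := by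
      exact_mod_cast hcon
    exact one_ne_zero (congrArg Prod.fst this)
  -- traces are constant on N \ {1}
  set a : ℂ := (A n₀).trace with ha
  have htra : ∀ n : N, n ≠ 1 → (A n).trace = a := by
    intro n hn
    obtain ⟨h, hh⟩ := htrans n₀ n hn₀ hn
    have hconj : (SemidirectProduct.inl n : Multiplicative (ZMod p × ZMod p) ⋊[φ] H) =
        SemidirectProduct.inr h * SemidirectProduct.inl n₀ * SemidirectProduct.inr h⁻¹ := by
      rw [← SemidirectProduct.inl_aut, hh]
    have hval : A n = (ρ (SemidirectProduct.inr h) : Matrix (Fin m) (Fin m) ℂ) * A n₀ *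
        (((ρ (SemidirectProduct.inr h))⁻¹ : GL (Fin m) ℂ) : Matrix (Fin m) (Fin m) ℂ) := by
      simp only [hA, hconj, map_mul, map_inv, Units.val_mul]
    rw [hval, ha, Matrix.trace_units_conj]
  -- the nontrivial character
  have hp2 : (2 : ℕ) ≤ p := hp.two_le
  obtain ⟨ζ, hζprim⟩ : ∃ ζ : ℂ, IsPrimitiveRoot ζ p :=
    ⟨_, Complex.isPrimitiveRoot_exp p hp.ne_zero⟩
  set ψ : AddChar (ZMod p) ℂ := AddChar.zmodChar p hζprim.pow_eq_one with hψdef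
  have hψne : ψ ≠ 0 := by
    rw [AddChar.ne_zero_iff]
    refine ⟨1, ?_⟩
    have : ψ 1 = ζ ^ (1 : ZMod p).val := rfl
    rw [this, ZMod.val_one p, pow_one]
    exact hζprim.ne_one hp.one_lt
  have hψsum : ∑ x : ZMod p, ψ x = 0 := AddChar.sum_eq_zero_iff_ne_zero.mpr hψne
  set c : N → ℂ := fun n => ψ (Multiplicative.toAdd n).1 with hc
  have hc1 : c 1 = 1 := by simp [hc]
  have hcmul : ∀ x y : N, c (x * y) = c x * c y := by
    intro x y
    show ψ ((Multiplicative.toAdd x).1 + (Multiplicative.toAdd y).1) = _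
    exact AddChar.map_add_eq_mul ψ _ _
  have hcsum : ∑ n : N, c n = 0 := by
    have h1 : ∑ n : N, c n = ∑ z : ZMod p × ZMod p, ψ z.1 :=
      Fintype.sum_equiv Multiplicative.toAdd _ _ (fun n => rfl)
    rw [h1, Fintype.sum_prod_type]
    simp only [Finset.sum_const, Finset.card_univ]
    rw [← Finset.smul_sum, hψsum, smul_zero]
  -- cardinality facts
  have hcardN : Fintype.card N = p ^ 2 := by
    have h1 : Fintype.card N = Fintype.card (ZMod p × ZMod p) :=
      Fintype.card_congr Multiplicative.toAdd
    rw [h1, Fintype.card_prod, ZMod.card, sq]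
  have hP2ne : ((p : ℂ) ^ 2) ≠ 0 :=
    pow_ne_zero 2 (Nat.cast_ne_zero.mpr hp.ne_zero)
  -- the averaging operators
  set S : (N → ℂ) → Matrix (Fin m) (Fin m) ℂ := fun c => ∑ n : N, c n • A n with hS
  have hSS : ∀ c : N → ℂ, (∀ x y : N, c (x * y) = c x * c y) →
      S c * S c = ((p : ℂ) ^ 2) • S c := by
    intro c hcm
    have h1 : S c * S c = ∑ n : N, c n • (A n * S c) := by
      rw [hS, Finset.sum_mul]
      exact Finset.sum_congr rfl fun n _ => by rw [Matrix.smul_mul]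
    have h2 : ∀ n : N, c n • (A n * S c) = S c := by
      intro n
      have : A n * S c = ∑ k : N, c k • A (n * k) := by
        rw [hS, Finset.mul_sum]
        exact Finset.sum_congr rfl fun k _ => by rw [Matrix.mul_smul, hAmul]
      rw [this, Finset.smul_sum]
      have : ∀ k : N, c n • c k • A (n * k) = c (n * k) • A (n * k) := by
        intro k; rw [smul_smul, ← hcm]
      rw [Finset.sum_congr rfl fun k _ => this k]
      exact Fintype.sum_equiv (Equiv.mulLeft n) _ _ (fun k => rfl)
    rw [h1, Finset.sum_congr rfl fun n _ => h2 n, Finset.sum_const, Finset.card_univ,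
      hcardN, ← Nat.cast_smul_eq_nsmul ℂ]
    norm_num
  -- trace of the averaging operators
  have htrS : ∀ c : N → ℂ, (S c).trace =
      c 1 * m + (∑ n ∈ Finset.univ \ {(1 : N)}, c n) * a := by
    intro c
    have h1 : (S c).trace = ∑ n : N, c n * (A n).trace := by
      rw [hS, Matrix.trace_sum]
      exact Finset.sum_congr rfl fun n _ => by rw [Matrix.trace_smul, smul_eq_mul]
    rw [h1, Finset.sum_eq_sum_sdiff_singleton_add (Finset.mem_univ (1 : N))]
    rw [hA1, Matrix.trace_one]
    have h2 : ∑ n ∈ Finset.univ \ {(1 : N)}, c n * (A n).trace =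
        (∑ n ∈ Finset.univ \ {(1 : N)}, c n) * a := by
      rw [Finset.sum_mul]
      refine Finset.sum_congr rfl fun n hn => ?_
      rw [htra n (by simpa using (Finset.mem_sdiff.mp hn).2)]
    rw [h2, Fintype.card_fin]
    ring
  -- sums over N \ {1}
  have hsum_c : ∑ n ∈ Finset.univ \ {(1 : N)}, c n = -1 := by
    have := Finset.sum_eq_sum_sdiff_singleton_add (Finset.mem_univ (1 : N)) c
    rw [hcsum] at this
    rw [hc1] at this
    linear_combination -this
  have hsum_one : ∑ n ∈ Finset.univ \ {(1 : N)}, (1 : ℂ) = (p : ℂ) ^ 2 - 1 := by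
    rw [Finset.sum_const, Finset.card_sdiff_of_subset (by simp), Finset.card_singleton,
      Finset.card_univ, hcardN, nsmul_eq_mul, mul_one, Nat.cast_sub, Nat.cast_pow,
      Nat.cast_one]
    nlinarith [hp.two_le]
  -- the two idempotents
  have hidem : ∀ c : N → ℂ, (∀ x y : N, c (x * y) = c x * c y) →
      (((p : ℂ) ^ 2)⁻¹ • S c) * (((p : ℂ) ^ 2)⁻¹ • S c) = ((p : ℂ) ^ 2)⁻¹ • S c := by
    intro c hcm
    rw [Matrix.smul_mul, Matrix.mul_smul, hSS c hcm, smul_smul, smul_smul]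
    congr 1
    field_simp
  obtain ⟨s, hs, _⟩ := stmt9_trace_idem _ (hidem c hcmul)
  obtain ⟨r, hr, hr1⟩ := stmt9_trace_idem _ (hidem (fun _ => 1) (by simp))
  -- compute the traces
  have hts : ((p : ℂ) ^ 2)⁻¹ * ((m : ℂ) - a) = (s : ℂ) := by
    rw [← hs, Matrix.trace_smul, smul_eq_mul, htrS c, hc1, one_mul, hsum_c]
    ring
  have htr' : ((p : ℂ) ^ 2)⁻¹ * ((m : ℂ) + ((p : ℂ) ^ 2 - 1) * a) = (r : ℂ) := by
    rw [← hr, Matrix.trace_smul, smul_eq_mul, htrS (fun _ => 1), hsum_one]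
    ring
  -- s ≥ 1 by faithfulness
  have hsne : s ≠ 0 := by
    intro hs0
    rw [hs0, Nat.cast_zero] at hts
    have hma : a = (m : ℂ) := by
      rcases mul_eq_zero.mp hts with h | h
      · exact absurd h (inv_ne_zero hP2ne)
      · linear_combination -h
    -- the trivial-character projection has full trace, hence is the identity
    have htrfull : (((p : ℂ) ^ 2)⁻¹ • S (fun _ => 1)).trace = (m : ℂ) := by
      rw [Matrix.trace_smul, smul_eq_mul, htrS (fun _ => 1), hsum_one, hma]
      field_simp
      rw [div_eq_iff hP2ne]
      ring
    have hP1 : ((p : ℂ) ^ 2)⁻¹ • S (fun _ => 1) = 1 := hr1 htrfull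
    -- but then A n₀ = 1, contradicting faithfulness
    have hAS : A n₀ * S (fun _ => 1) = S (fun _ => 1) := by
      rw [hS, Finset.mul_sum]
      simp only [one_smul]
      have h1 : ∀ k : N, A n₀ * A k = A (n₀ * k) := fun k => (hAmul n₀ k).symm
      rw [Finset.sum_congr rfl fun k _ => h1 k]
      exact Fintype.sum_equiv (Equiv.mulLeft n₀) _ _ (fun k => rfl)
    have hAn₀ : A n₀ = 1 := by
      calc A n₀ = A n₀ * (((p : ℂ) ^ 2)⁻¹ • S (fun _ => 1)) := by rw [hP1, mul_one]
        _ = ((p : ℂ) ^ 2)⁻¹ • (A n₀ * S (fun _ => 1)) := by rw [Matrix.mul_smul]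
        _ = ((p : ℂ) ^ 2)⁻¹ • S (fun _ => 1) := by rw [hAS]
        _ = 1 := hP1
    have : ρ (SemidirectProduct.inl n₀) = ρ 1 := by
      rw [map_one]
      exact Units.ext hAn₀
    have := SemidirectProduct.inl_injective (hρ this)
    exact hn₀ this
  -- final arithmetic
  have hinv : ((p : ℂ) ^ 2)⁻¹ * ((p : ℂ) ^ 2) = 1 := inv_mul_cancel₀ hP2ne
  have h3 : (p : ℂ) ^ 2 * (m : ℂ) = (p : ℂ) ^ 2 * ((((p : ℂ) ^ 2) - 1) * s + r) := by
    linear_combination ((p : ℂ) ^ 2 * ((p : ℂ) ^ 2 - 1)) * hts + ((p : ℂ) ^ 2) * htr' -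
      ((p : ℂ) ^ 2 * (m : ℂ)) * hinv
  have hmc : (m : ℂ) = (((p : ℂ) ^ 2) - 1) * s + r := mul_left_cancel₀ hP2ne h3
  have hple : 1 ≤ p ^ 2 := Nat.one_le_iff_ne_zero.mpr (pow_ne_zero 2 hp.ne_zero)
  have hmnat : m = (p ^ 2 - 1) * s + r := by
    have : (m : ℂ) = (((p ^ 2 - 1) * s + r : ℕ) : ℂ) := by
      rw [hmc]
      push_cast [Nat.cast_sub hple]
      ring
    exact_mod_cast this
  have hs1 : 1 ≤ s := Nat.one_le_iff_ne_zero.mpr hsne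
  calc p ^ 2 - 1 ≤ (p ^ 2 - 1) * s := Nat.le_mul_of_pos_right _ hs1
    _ ≤ m := by rw [hmnat]; exact Nat.le_add_right _ _
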